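/- arXiv:1910.00615 — 4 statements merged into one kernel-verified Lean document; each statement's English description precedes it below -/
import Mathlib

section
/- The function ℓ(α) = 1/cos α + tan α + (3/2)π − 2α + 1, defined for α ∈ (0, π/2), attains its minimum at α = π/6, and ℓ(π/6) = (7/6)π + 1 + √3. -/
open Real

private noncomputable def fL : ℝ → ℝ :=
  fun α : ℝ => 1 / Real.cos α + Real.tan α + (3 / 2) * Real.pi - 2 * α + 1

private lemma fL_hasDeriv (x : ℝ) (hx : Real.cos x ≠ 0) :
    HasDerivAt fL (Real.sin x / Real.cos x ^ 2 + 1 / Real.cos x ^ 2 - 2) x := by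
  have h1 : HasDerivAt (fun a : ℝ => 1 / Real.cos a) (Real.sin x / Real.cos x ^ 2) x := by
    have := (Real.hasDerivAt_cos x).fun_inv hx
    simpa [one_div, neg_neg, neg_div] using this
  have h2 := Real.hasDerivAt_tan hx
  have h3 : HasDerivAt (fun a : ℝ => 2 * a) 2 x := by
    simpa using (hasDerivAt_id x).const_mul 2
  have := (((h1.add h2).add_const ((3/2) * Real.pi)).sub h3).add_const 1
  exact this

private lemma cos_pos_of_Icc {x : ℝ} (h0 : 0 ≤ x) (h1 : x < Real.pi / 2) :
    0 < Real.cos x :=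
  Real.cos_pos_of_mem_Ioo ⟨by linarith [Real.pi_pos], h1⟩

private lemma pi6_lt : Real.pi / 6 < Real.pi / 2 := by linarith [Real.pi_pos]

private lemma fL_anti : StrictAntiOn fL (Set.Icc 0 (Real.pi / 6)) := by
  apply strictAntiOn_of_deriv_neg (convex_Icc _ _)
  · intro x hx
    have hc : Real.cos x ≠ 0 := (cos_pos_of_Icc hx.1 (lt_of_le_of_lt hx.2 pi6_lt)).ne'
    exact ((fL_hasDeriv x hc).continuousAt).continuousWithinAt
  · intro x hx
    rw [interior_Icc] at hx
    have hx1 := hx.1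
    have hx2 := hx.2
    have hcpos : 0 < Real.cos x := cos_pos_of_Icc hx1.le (lt_trans hx2 pi6_lt)
    rw [(fL_hasDeriv x hcpos.ne').deriv]
    have hs : Real.sin x < 1 / 2 := by
      have := Real.sin_lt_sin_of_lt_of_le_pi_div_two (by linarith [Real.pi_pos] : -(Real.pi/2) ≤ x) pi6_lt.le hx2
      simpa [Real.sin_pi_div_six] using this
    have hs0 : 0 < Real.sin x := Real.sin_pos_of_pos_of_lt_pi hx1 (by linarith [Real.pi_pos])
    have hsq : Real.cos x ^ 2 = 1 - Real.sin x ^ 2 := by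
      have := Real.sin_sq_add_cos_sq x; nlinarith
    rw [← add_div, div_sub' (by positivity), div_neg_iff]
    right
    constructor
    · nlinarith
    · positivity

private lemma fL_mono : StrictMonoOn fL (Set.Ico (Real.pi / 6) (Real.pi / 2)) := by
  apply strictMonoOn_of_deriv_pos (convex_Ico _ _)
  · intro x hx
    have hc : Real.cos x ≠ 0 := (cos_pos_of_Icc (le_trans (by positivity) hx.1) hx.2).ne'
    exact ((fL_hasDeriv x hc).continuousAt).continuousWithinAt
  · intro x hx
    rw [interior_Ico] at hx
    have hx1 := hx.1
    have hx2 := hx.2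
    have hp6 : (0:ℝ) ≤ Real.pi / 6 := by positivity
    have hcpos : 0 < Real.cos x := cos_pos_of_Icc (le_trans hp6 hx1.le) hx2
    rw [(fL_hasDeriv x hcpos.ne').deriv]
    have hs : 1 / 2 < Real.sin x := by
      have := Real.sin_lt_sin_of_lt_of_le_pi_div_two (by linarith [Real.pi_pos] : -(Real.pi/2) ≤ Real.pi/6) (le_of_lt hx2) hx1
      simpa [Real.sin_pi_div_six] using this
    have hs1 : Real.sin x ≤ 1 := Real.sin_le_one x
    have hsq : Real.cos x ^ 2 = 1 - Real.sin x ^ 2 := by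
      have := Real.sin_sq_add_cos_sq x; nlinarith
    rw [← add_div, div_sub' (by positivity)]
    apply div_pos
    · nlinarith
    · positivity

theorem hunter_length_min_at_pi_div_six :
    IsMinOn (fun α : ℝ => 1 / Real.cos α + Real.tan α + (3 / 2) * Real.pi - 2 * α + 1)
      (Set.Ioo 0 (Real.pi / 2)) (Real.pi / 6) ∧
    1 / Real.cos (Real.pi / 6) + Real.tan (Real.pi / 6) + (3 / 2) * Real.pi
        - 2 * (Real.pi / 6) + 1
      = (7 / 6) * Real.pi + 1 + Real.sqrt 3 := by
  constructor
  · intro x hx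
    simp only [Set.mem_Ioo] at hx
    show fL (Real.pi / 6) ≤ fL x
    rcases le_total x (Real.pi / 6) with h | h
    · rcases eq_or_lt_of_le h with rfl | h'
      · exact le_refl _
      · exact le_of_lt (fL_anti ⟨hx.1.le, h⟩ ⟨by positivity, le_refl _⟩ h')
    · rcases eq_or_lt_of_le h with rfl | h'
      · exact le_refl _
      · exact le_of_lt (fL_mono ⟨le_refl _, pi6_lt⟩ ⟨h, hx.2⟩ h')
  · rw [Real.tan_eq_sin_div_cos, Real.sin_pi_div_six, Real.cos_pi_div_six]
    have h3 : Real.sqrt 3 * Real.sqrt 3 = 3 := Real.mul_self_sqrt (by norm_num)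
    have h3' : Real.sqrt 3 ≠ 0 := by positivity
    field_simp
    ring_nf
    nlinarith [h3]
end

section
/- A connected compact set S in the plane intersects every support line of a convex compact set D if and only if D ⊆ convexHull(S). -/
open Finset in
lemma aux_isCompact_convexHull {S : Set (EuclideanSpace ℝ (Fin 2))} (hS : IsCompact S) :
    IsCompact (convexHull ℝ S) := by
  classical
  rcases S.eq_empty_or_nonempty with rfl | ⟨s₀, hs₀⟩
  · simp
  let E := EuclideanSpace ℝ (Fin 2)
  let f : (Fin 3 → ℝ) × (Fin 3 → EuclideanSpace ℝ (Fin 2)) → EuclideanSpace ℝ (Fin 2) :=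
    fun p => ∑ i, p.1 i • p.2 i
  have hfc : Continuous f := by
    apply continuous_finset_sum
    intro i _
    exact ((continuous_apply i).comp continuous_fst).smul
      ((continuous_apply i).comp continuous_snd)
  have hK : IsCompact ((stdSimplex ℝ (Fin 3)) ×ˢ (Set.univ.pi fun _ : Fin 3 => S)) :=
    (isCompact_stdSimplex ℝ (Fin 3)).prod (isCompact_univ_pi fun _ => hS)
  have himg : f '' ((stdSimplex ℝ (Fin 3)) ×ˢ (Set.univ.pi fun _ : Fin 3 => S))
      = convexHull ℝ S := by
    apply Set.Subset.antisymm
    · rintro x ⟨⟨w, z⟩, ⟨hw, hz⟩, rfl⟩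
      exact (convex_convexHull ℝ S).sum_mem (fun i _ => hw.1 i) hw.2
        (fun i _ => subset_convexHull ℝ S (hz i (Set.mem_univ i)))
    · intro x hx
      rw [convexHull_eq_union] at hx
      simp only [Set.mem_iUnion, exists_prop] at hx
      obtain ⟨t, htS, hai, hxt⟩ := hx
      have hcard : Fintype.card ↥t ≤ Fintype.card (Fin 3) := by
        have h1 := hai.card_le_finrank_succ
        have h2 : Module.finrank ℝ (vectorSpan ℝ (Set.range ((↑) : t → E))) ≤ 2 := by
          have h3 := Submodule.finrank_le (vectorSpan ℝ (Set.range ((↑) : t → E)))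
          rwa [finrank_euclideanSpace_fin] at h3
        simp only [Fintype.card_fin]
        omega
      obtain ⟨e⟩ := Function.Embedding.nonempty_of_card_le hcard
      rw [Finset.convexHull_eq] at hxt
      obtain ⟨w, hw0, hw1, hwx⟩ := hxt
      let w' : Fin 3 → ℝ := fun j => if h : ∃ i, e i = j then w ↑h.choose else 0
      let z' : Fin 3 → E := fun j => if h : ∃ i, e i = j then ↑h.choose else s₀
      have key : ∀ {M : Type} [AddCommMonoid M] (F : ℝ → E → M), (∀ y, F 0 y = 0) →
          ∑ j, F (w' j) (z' j) = ∑ y ∈ t.attach, F (w ↑y) ↑y := by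
        intro M _ F hF
        rw [← Finset.sum_subset (Finset.subset_univ (Finset.univ.image e))]
        · rw [Finset.sum_image (fun a _ b _ h => e.injective h)]
          apply Finset.sum_congr rfl
          intro i _
          have h : ∃ i', e i' = e i := ⟨i, rfl⟩
          have hch : h.choose = i := e.injective h.choose_spec
          have hw' : w' (e i) = w ↑i := by
            rw [show w' (e i) = w ↑h.choose from dif_pos h, hch]
          have hz' : z' (e i) = ↑i := by
            rw [show z' (e i) = ↑h.choose from dif_pos h, hch]
          rw [hw', hz']
        · intro j _ hj
          have h : ¬ ∃ i, e i = j := by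
            simpa [Finset.mem_image] using hj
          simp only [w', dif_neg h, hF]
      refine ⟨(w', z'), ⟨⟨fun j => ?_, ?_⟩, fun j _ => ?_⟩, ?_⟩
      · show 0 ≤ w' j
        by_cases h : ∃ i, e i = j
        · have hj : w' j = w ↑h.choose := dif_pos h
          rw [hj]
          exact hw0 _ h.choose.2
        · have hj : w' j = 0 := dif_neg h
          rw [hj]
      · have := key (fun a _ => a) (fun _ => rfl)
        rw [this, Finset.sum_attach t w, hw1]
      · show z' j ∈ S
        by_cases h : ∃ i, e i = j
        · have hj : z' j = ↑h.choose := dif_pos h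
          rw [hj]
          exact htS h.choose.2
        · have hj : z' j = s₀ := dif_neg h
          rw [hj]
          exact hs₀
      · have := key (fun a y => a • y) (fun y => zero_smul ℝ y)
        show ∑ j, w' j • z' j = x
        rw [this, Finset.sum_attach t (fun y => w y • y)]
        rw [Finset.centerMass_eq_of_sum_1 _ _ hw1] at hwx
        simpa using hwx
  rw [← himg]
  exact hK.image hfc

/-- A connected compact set `S` in the plane intersects every support line of a
convex compact set `D` if and only if `D ⊆ convexHull ℝ S`.  A support line is a
line `{x | ⟪u, x⟫ = c}` (with `u ≠ 0`) meeting `D` such that `D` lies entirely in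
one of the two closed half-planes it determines. -/
theorem connected_meets_support_lines_iff_subset_hull
    (D S : Set (EuclideanSpace ℝ (Fin 2)))
    (hDconv : Convex ℝ D) (hDcomp : IsCompact D) (hDne : D.Nonempty)
    (hScomp : IsCompact S) (hSconn : IsConnected S) :
    (∀ (u : EuclideanSpace ℝ (Fin 2)) (c : ℝ), u ≠ 0 →
        ({x | (inner ℝ u x : ℝ) = c} ∩ D).Nonempty →
        (∀ x ∈ D, (inner ℝ u x : ℝ) ≤ c) →
        ({x | (inner ℝ u x : ℝ) = c} ∩ S).Nonempty)
      ↔ D ⊆ convexHull ℝ S := by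
  constructor
  · intro h d hd
    by_contra hds
    have hK : IsCompact (convexHull ℝ S) := aux_isCompact_convexHull hScomp
    obtain ⟨f, u0, hfs, hfd⟩ :=
      geometric_hahn_banach_closed_point (convex_convexHull ℝ S) hK.isClosed hds
    set v := (InnerProductSpace.toDual ℝ (EuclideanSpace ℝ (Fin 2))).symm f with hv
    have hvx : ∀ x, (inner ℝ v x : ℝ) = f x := fun x => by
      simp [hv, InnerProductSpace.toDual_symm_apply]
    obtain ⟨s₀, hs₀⟩ := hSconn.nonempty
    have hvne : v ≠ 0 := by
      intro h0
      have h1 : f s₀ < u0 := hfs s₀ (subset_convexHull ℝ S hs₀)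
      have h2 : (inner ℝ v s₀ : ℝ) = f s₀ := hvx s₀
      have h3 : (inner ℝ v d : ℝ) = f d := hvx d
      rw [h0] at h2 h3
      simp at h2 h3
      linarith
    have hcont : Continuous fun x : EuclideanSpace ℝ (Fin 2) => (inner ℝ v x : ℝ) :=
      continuous_const.inner continuous_id
    obtain ⟨m, hmD, hm⟩ := hDcomp.exists_isMaxOn hDne hcont.continuousOn
    obtain ⟨s, hsl, hsS⟩ := h v (inner ℝ v m) hvne ⟨m, rfl, hmD⟩ (fun x hx => hm hx)
    have h1 : (inner ℝ v s : ℝ) = f s := hvx s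
    have h2 : f s < u0 := hfs s (subset_convexHull ℝ S hsS)
    have h3 : (inner ℝ v d : ℝ) ≤ inner ℝ v m := hm hd
    have h4 : (inner ℝ v d : ℝ) = f d := hvx d
    have h5 : (inner ℝ v s : ℝ) = inner ℝ v m := hsl
    linarith
  · rintro hsub u c hu ⟨x₀, hx₀l, hx₀D⟩ hle
    have hx₀ : x₀ ∈ convexHull ℝ S := hsub hx₀D
    have hlin : IsLinearMap ℝ fun x : EuclideanSpace ℝ (Fin 2) => (inner ℝ u x : ℝ) :=
      ⟨fun a b => inner_add_right (𝕜 := ℝ) u a b,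
        fun r a => real_inner_smul_right u a r⟩
    have hcont : Continuous fun x : EuclideanSpace ℝ (Fin 2) => (inner ℝ u x : ℝ) :=
      continuous_const.inner continuous_id
    obtain ⟨sM, hsM, hM⟩ := hScomp.exists_isMaxOn hSconn.nonempty hcont.continuousOn
    obtain ⟨sm, hsm, hmn⟩ := hScomp.exists_isMinOn hSconn.nonempty hcont.continuousOn
    have hupper : convexHull ℝ S ⊆ {x | (inner ℝ u x : ℝ) ≤ inner ℝ u sM} :=
      convexHull_min (fun s hs => hM hs) (convex_halfSpace_le hlin _)
    have hlower : convexHull ℝ S ⊆ {x | (inner ℝ u sm : ℝ) ≤ inner ℝ u x} :=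
      convexHull_min (fun s hs => hmn hs) (convex_halfSpace_ge hlin _)
    have h1 : c ≤ inner ℝ u sM := hx₀l ▸ hupper hx₀
    have h2 : (inner ℝ u sm : ℝ) ≤ c := hx₀l ▸ hlower hx₀
    have := hSconn.isPreconnected.intermediate_value hsm hsM hcont.continuousOn
    obtain ⟨s, hsS, hfs⟩ := this ⟨h2, h1⟩
    exact ⟨s, hfs, hsS⟩
end

section
/- Let K be the unit circle centered at the origin in ℝ². A connected compact set S ⊆ ℝ² intersects every tangent line to K if and only if the closed unit disk is contained in the convex hull of S. -/
open Finset in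
/-- The convex hull of a compact nonempty set in the Euclidean plane is compact. -/
lemma isCompact_convexHull_of_isCompact_aux
    (S : Set (EuclideanSpace ℝ (Fin 2))) (hS : IsCompact S) (hne : S.Nonempty) :
    IsCompact (convexHull ℝ S) := by
  classical
  obtain ⟨a0, ha0⟩ := hne
  set g : (Fin 3 → ℝ) × (Fin 3 → EuclideanSpace ℝ (Fin 2)) → EuclideanSpace ℝ (Fin 2) :=
    fun p => ∑ i, p.1 i • p.2 i with hg
  have hgc : Continuous g := by
    apply continuous_finset_sum
    intro i _
    exact ((continuous_apply i).comp continuous_fst).smul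
      ((continuous_apply i).comp continuous_snd)
  have hK : IsCompact (stdSimplex ℝ (Fin 3) ×ˢ Set.univ.pi fun _ : Fin 3 => S) :=
    (isCompact_stdSimplex ℝ _).prod (isCompact_univ_pi fun _ => hS)
  have himg : convexHull ℝ S
      = g '' (stdSimplex ℝ (Fin 3) ×ˢ Set.univ.pi fun _ : Fin 3 => S) := by
    apply Set.Subset.antisymm
    · intro x hx
      obtain ⟨ι, hι, z, w, hzS, hai, hwpos, hwsum, hsum⟩ :=
        eq_pos_convex_span_of_mem_convexHull hx
      have hcard : Fintype.card ι ≤ 3 := by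
        have h1 := hai.card_le_finrank_succ
        have h2 : Module.finrank ℝ ↥(vectorSpan ℝ (Set.range z))
            ≤ Module.finrank ℝ (EuclideanSpace ℝ (Fin 2)) :=
          Submodule.finrank_le _
        rw [finrank_euclideanSpace] at h2
        simp only [Fintype.card_fin] at h2
        omega
      have hcard' : Fintype.card ι ≤ Fintype.card (Fin 3) := by simpa using hcard
      obtain ⟨e⟩ := Function.Embedding.nonempty_of_card_le hcard'
      set w' : Fin 3 → ℝ := fun j => if h : ∃ i, e i = j then w h.choose else 0 with hw'
      set z' : Fin 3 → EuclideanSpace ℝ (Fin 2) := fun j => if h : ∃ i, e i = j then z h.choose else a0 with hz'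
      have hwe : ∀ i : ι, w' (e i) = w i := by
        intro i
        have hex : ∃ i', e i' = e i := ⟨i, rfl⟩
        have hch : hex.choose = i := e.injective hex.choose_spec
        simp only [hw', dif_pos hex, hch]
      have hze : ∀ i : ι, z' (e i) = z i := by
        intro i
        have hex : ∃ i', e i' = e i := ⟨i, rfl⟩
        have hch : hex.choose = i := e.injective hex.choose_spec
        simp only [hz', dif_pos hex, hch]
      have hzero : ∀ j : Fin 3, (¬ ∃ i, e i = j) → w' j = 0 := by
        intro j hj; simp only [hw', dif_neg hj]
      have hsum_eq : ∀ {M : Type} [AddCommMonoid M] (F : Fin 3 → M),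
          (∀ j, (¬ ∃ i, e i = j) → F j = 0) → ∑ j, F j = ∑ i, F (e i) := by
        intro M _ F hF
        rw [← Finset.sum_map Finset.univ e F]
        refine (Finset.sum_subset (Finset.subset_univ _) ?_).symm
        intro j _ hj
        apply hF
        intro ⟨i, hi⟩
        exact hj (Finset.mem_map.mpr ⟨i, Finset.mem_univ i, hi⟩)
      refine ⟨(w', z'), ⟨⟨fun j => ?_, ?_⟩, fun j _ => ?_⟩, ?_⟩
      · show (0:ℝ) ≤ w' j
        by_cases hj : ∃ i, e i = j
        · rw [hw']; simp only [dif_pos hj]; exact (hwpos _).le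
        · rw [hzero j hj]
      · rw [hsum_eq w' hzero]
        simp only [hwe]
        exact hwsum
      · simp only [hz']
        by_cases hj : ∃ i, e i = j
        · simp only [dif_pos hj]; exact hzS (Set.mem_range_self _)
        · simp only [dif_neg hj]; exact ha0
      · show ∑ j, w' j • z' j = x
        rw [hsum_eq (fun j => w' j • z' j) (fun j hj => by show w' j • z' j = 0; rw [hzero j hj, zero_smul])]
        simp only [hwe, hze]
        exact hsum
    · rintro _ ⟨⟨w, z⟩, ⟨hw, hz⟩, rfl⟩
      exact (convex_convexHull ℝ S).sum_mem (fun i _ => hw.1 i) hw.2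
        (fun i _ => subset_convexHull ℝ S (hz i (Set.mem_univ i)))
  rw [himg]
  exact hK.image hgc

/-- A connected compact set `S ⊆ ℝ²` meets every tangent line to the unit circle
(the lines `{x | ⟪u, x⟫ = 1}` with `‖u‖ = 1`, i.e. the lines at distance exactly `1`
from the origin) if and only if the closed unit disk is contained in `convexHull ℝ S`. -/
theorem meets_all_tangents_iff_disk_subset_hull
    (S : Set (EuclideanSpace ℝ (Fin 2)))
    (hScomp : IsCompact S) (hSconn : IsConnected S) :
    (∀ u : EuclideanSpace ℝ (Fin 2), ‖u‖ = 1 →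
        (S ∩ {x | (inner ℝ u x : ℝ) = 1}).Nonempty)
      ↔ Metric.closedBall (0 : EuclideanSpace ℝ (Fin 2)) 1 ⊆ convexHull ℝ S := by
  constructor
  · intro h x hx
    have hx1 : ‖x‖ ≤ 1 := by simpa using hx
    by_contra hxS
    have hhull : IsCompact (convexHull ℝ S) :=
      isCompact_convexHull_of_isCompact_aux S hScomp hSconn.nonempty
    obtain ⟨f, c, hf1, hf2⟩ := geometric_hahn_banach_closed_point
      (convex_convexHull ℝ S) hhull.isClosed hxS
    obtain ⟨v, rfl⟩ := (InnerProductSpace.toDual ℝ _).surjective f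
    obtain ⟨a, haS⟩ := hSconn.nonempty
    have haHull : a ∈ convexHull ℝ S := subset_convexHull ℝ S haS
    have hv : v ≠ 0 := by
      rintro rfl
      have h1 := hf1 a haHull
      simp only [InnerProductSpace.toDual_apply_apply, inner_zero_left] at h1 hf2
      linarith
    have hvn : (0:ℝ) < ‖v‖ := norm_pos_iff.mpr hv
    set u : EuclideanSpace ℝ (Fin 2) := ‖v‖⁻¹ • v with hu_def
    have hun : ‖u‖ = 1 := by
      rw [hu_def, norm_smul, norm_inv, norm_norm, inv_mul_cancel₀ hvn.ne']
    obtain ⟨s, hsS, hs⟩ := h u hun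
    have hs' : (inner ℝ u s : ℝ) = 1 := hs
    have h' : ‖v‖⁻¹ * (inner ℝ v s : ℝ) = 1 := by
      rw [← real_inner_smul_left]; exact hs'
    have hvs : ‖v‖ = (inner ℝ v s : ℝ) := (inv_mul_eq_one₀ hvn.ne').mp h'
    have h1 : (inner ℝ v s : ℝ) < c := by
      simpa only [InnerProductSpace.toDual_apply_apply] using hf1 s (subset_convexHull ℝ S hsS)
    have h2 : c < (inner ℝ v x : ℝ) := by
      simpa only [InnerProductSpace.toDual_apply_apply] using hf2
    have h3 : (inner ℝ v x : ℝ) ≤ ‖v‖ := by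
      calc (inner ℝ v x : ℝ) ≤ ‖v‖ * ‖x‖ := real_inner_le_norm v x
        _ ≤ ‖v‖ * 1 := by nlinarith
        _ = ‖v‖ := mul_one _
    linarith
  · intro h u hu
    obtain ⟨a, haS⟩ := hSconn.nonempty
    have hcont : Continuous fun y : EuclideanSpace ℝ (Fin 2) => (inner ℝ u y : ℝ) :=
      continuous_const.inner continuous_id
    obtain ⟨s1, hs1S, hs1⟩ := hScomp.exists_isMaxOn ⟨a, haS⟩ hcont.continuousOn
    obtain ⟨s2, hs2S, hs2⟩ := hScomp.exists_isMinOn ⟨a, haS⟩ hcont.continuousOn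
    have hlin : IsLinearMap ℝ fun y : EuclideanSpace ℝ (Fin 2) => (inner ℝ u y : ℝ) :=
      ⟨fun a b => inner_add_right u a b, fun c a => real_inner_smul_right u a c⟩
    have huB : u ∈ convexHull ℝ S := h (by simp [hu])
    have hnuB : -u ∈ convexHull ℝ S := h (by simp [hu])
    have huu : (inner ℝ u u : ℝ) = 1 := by
      rw [real_inner_self_eq_norm_sq, hu]; norm_num
    have hub : (inner ℝ u u : ℝ) ≤ inner ℝ u s1 := by
      have hsub : convexHull ℝ S ⊆ {y | (inner ℝ u y : ℝ) ≤ inner ℝ u s1} :=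
        convexHull_min (fun y hy => hs1 hy) (convex_halfSpace_le hlin _)
      exact hsub huB
    have hlb : (inner ℝ u s2 : ℝ) ≤ inner ℝ u (-u) := by
      have hsub : convexHull ℝ S ⊆ {y | (inner ℝ u s2 : ℝ) ≤ inner ℝ u y} :=
        convexHull_min (fun y hy => hs2 hy) (convex_halfSpace_ge hlin _)
      exact hsub hnuB
    have hlow : (inner ℝ u s2 : ℝ) ≤ 1 := by
      rw [inner_neg_right, huu] at hlb; linarith
    have hhigh : (1:ℝ) ≤ inner ℝ u s1 := huu ▸ hub
    obtain ⟨s, hsS, hsv⟩ := hSconn.isPreconnected.intermediate_value hs2S hs1S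
      hcont.continuousOn (Set.mem_Icc.mpr ⟨hlow, hhigh⟩)
    exact ⟨s, hsS, hsv⟩
end

section
/- The curve consisting of a semicircle of the unit circle extended at each end by a tangent segment of length 1 has total length π + 2, and its convex hull contains the closed unit disk. -/
open Real

/-- The point `(a, b)` of the Euclidean plane. -/
noncomputable def pt (a b : ℝ) : EuclideanSpace ℝ (Fin 2) :=
  (EuclideanSpace.equiv (Fin 2) ℝ).symm ![a, b]

open Set

lemma pt_apply_zero (a b : ℝ) : pt a b 0 = a := rfl
lemma pt_apply_one (a b : ℝ) : pt a b 1 = b := rfl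

lemma dist_pt (a b c d : ℝ) :
    dist (pt a b) (pt c d) = Real.sqrt ((a - c)^2 + (b - d)^2) := by
  rw [EuclideanSpace.dist_eq]
  simp [Fin.sum_univ_two, pt_apply_zero, pt_apply_one, Real.dist_eq, sq_abs]

lemma pt_comb (k l u v u' v' : ℝ) :
    k • pt u v + l • pt u' v' = pt (k*u + l*u') (k*v + l*v') := by
  ext i
  fin_cases i <;> simp [pt]

lemma chord (s t : ℝ) :
    dist (pt (cos s) (sin s)) (pt (cos t) (sin t)) = 2 * |sin ((s - t)/2)| := by
  rw [dist_pt]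
  have h1 : (cos s - cos t)^2 + (sin s - sin t)^2 = 2 - 2 * cos (s - t) := by
    rw [Real.cos_sub]; nlinarith [sin_sq_add_cos_sq s, sin_sq_add_cos_sq t]
  have h2 : 2 - 2 * cos (s - t) = 4 * sin ((s - t)/2)^2 := by
    have h := Real.cos_two_mul ((s - t)/2)
    have h' := Real.sin_sq_add_cos_sq ((s - t)/2)
    have he : (2:ℝ) * ((s-t)/2) = s - t := by ring
    rw [he] at h; nlinarith
  rw [h1, h2]
  rw [show (4 : ℝ) * sin ((s-t)/2)^2 = (2 * |sin ((s-t)/2)|)^2 by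
    rw [mul_pow, sq_abs]; ring]
  exact Real.sqrt_sq (by positivity)

lemma evar_id {a b : ℝ} (hab : a ≤ b) :
    eVariationOn (id : ℝ → ℝ) (Set.Icc a b) = ENNReal.ofReal (b - a) := by
  apply le_antisymm
  · have := (monotoneOn_id (s := Set.Icc a b)).eVariationOn_le
      (Set.left_mem_Icc.2 hab) (Set.right_mem_Icc.2 hab)
    simpa [Set.inter_eq_self_of_subset_left, Set.Icc_subset_Icc_iff hab] using this
  · have := eVariationOn.edist_le (id : ℝ → ℝ) (Set.left_mem_Icc.2 hab) (Set.right_mem_Icc.2 hab)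
    rw [edist_dist, Real.dist_eq, id, id, abs_sub_comm, abs_of_nonneg (sub_nonneg.2 hab)] at this
    exact this

lemma evar_le_of_lip {g : ℝ → EuclideanSpace ℝ (Fin 2)} {a b : ℝ} (hab : a ≤ b)
    (h : LipschitzOnWith 1 g (Set.Icc a b)) :
    eVariationOn g (Set.Icc a b) ≤ ENNReal.ofReal (b - a) := by
  have := h.comp_eVariationOn_le (g := (id : ℝ → ℝ)) (s := Set.Icc a b) (Set.mapsTo_id _)
  simpa [evar_id hab] using this

lemma sin_div_lim : Filter.Tendsto (fun n : ℕ => (n:ℝ) * (2 * sin (π/(2*n))))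
    Filter.atTop (nhds π) := by
  have hs : Filter.Tendsto (fun x : ℝ => sin x / x) (nhdsWithin 0 {0}ᶜ) (nhds 1) := by
    have := hasDerivAt_iff_tendsto_slope.mp (Real.hasDerivAt_sin 0)
    have h' : (fun x : ℝ => sin x / x) = fun x : ℝ => x⁻¹ * sin x := by
      funext x; rw [div_eq_inv_mul]
    rw [h']
    simpa [slope_fun_def, Real.sin_zero, Real.cos_zero] using this
  have hxn : Filter.Tendsto (fun n : ℕ => π/(2*(n:ℝ))) Filter.atTop (nhds 0) := by
    have := tendsto_const_div_atTop_nhds_zero_nat (π/2)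
    refine this.congr fun n => by ring
  have hne : ∀ᶠ n : ℕ in Filter.atTop, π/(2*(n:ℝ)) ∈ ({0}ᶜ : Set ℝ) := by
    filter_upwards [Filter.eventually_ge_atTop 1] with n hn
    have hn' : (0:ℝ) < n := by exact_mod_cast hn
    have : (0:ℝ) < π/(2*n) := by positivity
    simpa using this.ne'
  have h2 : Filter.Tendsto (fun n : ℕ => sin (π/(2*(n:ℝ))) / (π/(2*(n:ℝ))))
      Filter.atTop (nhds 1) :=
    hs.comp (tendsto_nhdsWithin_of_tendsto_nhds_of_eventually_within _ hxn hne)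
  have h3 := h2.const_mul π
  rw [mul_one] at h3
  refine h3.congr' ?_
  filter_upwards [Filter.eventually_ge_atTop 1] with n hn
  have hn' : (0:ℝ) < n := by exact_mod_cast hn
  have hπ := Real.pi_pos
  field_simp

/-- The curve of Theorem 2: a semicircle of the unit circle extended at each end by a
tangent segment of length `1`, parametrized by arc length on `[0, π + 2]`.  It has
total length `π + 2` and its convex hull contains the closed unit disk. -/
theorem semicircle_with_tangents :
    ∃ f : ℝ → EuclideanSpace ℝ (Fin 2),
      (∀ t, f t =
        if t ≤ 1 then pt 1 (t - 1)
        else if t ≤ 1 + Real.pi then pt (Real.cos (t - 1)) (Real.sin (t - 1))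
        else pt (-1) (-(t - 1 - Real.pi))) ∧
      eVariationOn f (Set.Icc 0 (Real.pi + 2)) = ENNReal.ofReal (Real.pi + 2) ∧
      Metric.closedBall (0 : EuclideanSpace ℝ (Fin 2)) 1
        ⊆ convexHull ℝ (f '' Set.Icc 0 (Real.pi + 2)) := by
  have hπ := Real.pi_pos
  set F : ℝ → EuclideanSpace ℝ (Fin 2) := fun t =>
    if t ≤ 1 then pt 1 (t - 1)
    else if t ≤ 1 + Real.pi then pt (Real.cos (t - 1)) (Real.sin (t - 1))
    else pt (-1) (-(t - 1 - Real.pi)) with hFdef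
  refine ⟨F, fun t => rfl, ?_, ?_⟩
  · -- length computation
    -- the three pieces
    set g1 : ℝ → EuclideanSpace ℝ (Fin 2) := fun t => pt 1 (t - 1) with hg1
    set g2 : ℝ → EuclideanSpace ℝ (Fin 2) := fun t => pt (cos (t-1)) (sin (t-1)) with hg2
    set g3 : ℝ → EuclideanSpace ℝ (Fin 2) := fun t => pt (-1) (-(t - 1 - π)) with hg3
    have hE1 : Set.EqOn F g1 (Set.Icc 0 1) := by
      intro t ht; simp only [hFdef, hg1, if_pos ht.2]
    have hE2 : Set.EqOn F g2 (Set.Icc 1 (1+π)) := by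
      intro t ht
      by_cases h1 : t ≤ 1
      · have : t = 1 := le_antisymm h1 ht.1
        subst this
        simp [hFdef, hg2]
      · simp only [hFdef, hg2, if_neg h1, if_pos ht.2]
    have hE3 : Set.EqOn F g3 (Set.Icc (1+π) (π+2)) := by
      intro t ht
      have h1 : ¬ t ≤ 1 := by push_neg; linarith [ht.1]
      by_cases h2 : t ≤ 1 + π
      · have : t = 1 + π := le_antisymm h2 ht.1
        subst this
        simp only [hFdef, hg3, if_neg h1, if_pos h2]
        rw [show (1+π-1:ℝ) = π by ring, Real.cos_pi, Real.sin_pi]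
        norm_num
      · simp only [hFdef, hg3, if_neg h1, if_neg h2]
    -- Lipschitz bounds
    have lip1 : LipschitzOnWith 1 g1 (Set.Icc (0:ℝ) 1) := by
      apply LipschitzOnWith.of_dist_le_mul
      intro a _ b _
      rw [hg1]
      simp only
      rw [dist_pt, Real.dist_eq]
      rw [show ((1:ℝ)-1)^2 + (a-1-(b-1))^2 = (a-b)^2 by ring]
      rw [Real.sqrt_sq_eq_abs, NNReal.coe_one, one_mul]
    have lip3 : LipschitzOnWith 1 g3 (Set.Icc (1+π) (π+2)) := by
      apply LipschitzOnWith.of_dist_le_mul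
      intro a _ b _
      rw [hg3]
      simp only
      rw [dist_pt, Real.dist_eq]
      rw [show ((-1:ℝ)-(-1))^2 + (-(a-1-π)-(-(b-1-π)))^2 = (a-b)^2 by ring]
      rw [Real.sqrt_sq_eq_abs, NNReal.coe_one, one_mul]
    have lip2 : LipschitzOnWith 1 g2 (Set.Icc (1:ℝ) (1+π)) := by
      apply LipschitzOnWith.of_dist_le_mul
      intro a _ b _
      rw [hg2]
      simp only
      rw [chord, Real.dist_eq, NNReal.coe_one, one_mul]
      have : (a - 1 - (b-1))/2 = (a-b)/2 := by ring
      rw [this]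
      calc 2 * |sin ((a-b)/2)| ≤ 2 * |(a-b)/2| :=
            mul_le_mul_of_nonneg_left (Real.abs_sin_le_abs) (by norm_num)
        _ = |a - b| := by rw [abs_div, abs_two]; ring
    -- piece values
    have V1 : eVariationOn F (Set.Icc 0 1) = ENNReal.ofReal 1 := by
      rw [eVariationOn.eq_of_eqOn hE1]
      apply le_antisymm
      · simpa using evar_le_of_lip (by norm_num) lip1
      · have := eVariationOn.edist_le g1 (Set.left_mem_Icc.2 (by norm_num : (0:ℝ) ≤ 1))
          (Set.right_mem_Icc.2 (by norm_num : (0:ℝ) ≤ 1))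
        rw [edist_dist] at this
        have hd : dist (g1 0) (g1 1) = 1 := by
          rw [hg1]; simp only; rw [dist_pt]; norm_num
        rwa [hd] at this
    have V3 : eVariationOn F (Set.Icc (1+π) (π+2)) = ENNReal.ofReal 1 := by
      rw [eVariationOn.eq_of_eqOn hE3]
      apply le_antisymm
      · have := evar_le_of_lip (by linarith : (1+π:ℝ) ≤ π+2) lip3
        rw [show (π+2-(1+π):ℝ) = 1 by ring] at this
        exact this
      · have := eVariationOn.edist_le g3 (Set.left_mem_Icc.2 (by linarith : (1+π:ℝ) ≤ π+2))
          (Set.right_mem_Icc.2 (by linarith : (1+π:ℝ) ≤ π+2))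
        rw [edist_dist] at this
        have hd : dist (g3 (1+π)) (g3 (π+2)) = 1 := by
          rw [hg3]; simp only
          rw [show (-(1+π-1-π):ℝ) = 0 by ring, show (-(π+2-1-π):ℝ) = -1 by ring, dist_pt]
          norm_num
        rwa [hd] at this
    have V2 : eVariationOn F (Set.Icc 1 (1+π)) = ENNReal.ofReal π := by
      rw [eVariationOn.eq_of_eqOn hE2]
      apply le_antisymm
      · have := evar_le_of_lip (by linarith : (1:ℝ) ≤ 1+π) lip2
        rw [show (1+π-1:ℝ) = π by ring] at this
        exact this
      · -- lower bound via inscribed polygons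
        have key : ∀ n : ℕ, 1 ≤ n →
            ENNReal.ofReal ((n:ℝ) * (2 * sin (π/(2*n)))) ≤
              eVariationOn g2 (Set.Icc 1 (1+π)) := by
          intro n hn
          have hn' : (0:ℝ) < n := by exact_mod_cast hn
          set u : ℕ → ℝ := fun i => 1 + (min i n : ℕ) * (π/n) with hu
          have humono : Monotone u := by
            intro i j hij
            have hmm : ((min i n : ℕ):ℝ) ≤ ((min j n : ℕ):ℝ) :=
              Nat.cast_le.2 (min_le_min hij le_rfl)
            have hd : (0:ℝ) ≤ π/n := by positivity
            simp only [hu]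
            linarith [mul_le_mul_of_nonneg_right hmm hd]
          have humem : ∀ i, u i ∈ Set.Icc (1:ℝ) (1+π) := by
            intro i
            have h1 : (0:ℝ) ≤ (min i n : ℕ) * (π/n) := by positivity
            have h2 : ((min i n : ℕ) : ℝ) ≤ n := by
              exact_mod_cast min_le_right i n
            have h3 : ((min i n : ℕ) : ℝ) * (π/n) ≤ n * (π/n) := by
              apply mul_le_mul_of_nonneg_right h2 (by positivity)
            have h4 : (n:ℝ) * (π/n) = π := by field_simp
            constructor <;> simp only [hu] <;> nlinarith
          have := eVariationOn.sum_le (f := g2) (n := n) humono humem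
          have hterm : ∀ i ∈ Finset.range n,
              edist (g2 (u (i+1))) (g2 (u i)) = ENNReal.ofReal (2 * sin (π/(2*n))) := by
            intro i hi
            have hi' : i < n := Finset.mem_range.mp hi
            have e1 : u (i+1) = 1 + ((i:ℝ)+1) * (π/n) := by
              simp only [hu, min_eq_left (Nat.succ_le_of_lt hi')]
              push_cast; ring
            have e2 : u i = 1 + (i:ℝ) * (π/n) := by
              simp only [hu, min_eq_left hi'.le]
            have hsin : 0 ≤ sin (π/(2*(n:ℝ))) := by
              apply Real.sin_nonneg_of_nonneg_of_le_pi
              · positivity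
              · rw [div_le_iff₀ (by positivity)]
                have h1n : (1:ℝ) ≤ n := by exact_mod_cast hn
                nlinarith
            rw [edist_dist, hg2]
            simp only
            rw [e1, e2]
            rw [show (1 + ((i:ℝ)+1)*(π/n) - 1) = ((i:ℝ)+1)*(π/n) by ring,
              show (1 + (i:ℝ)*(π/n) - 1) = (i:ℝ)*(π/n) by ring, chord]
            rw [show ((((i:ℝ)+1)*(π/n) - (i:ℝ)*(π/n))/2) = π/(2*(n:ℝ)) by field_simp; ring]
            rw [abs_of_nonneg hsin]
          have hsum : (∑ i ∈ Finset.range n, edist (g2 (u (i+1))) (g2 (u i))) =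
              (n:ENNReal) * ENNReal.ofReal (2 * sin (π/(2*n))) := by
            rw [Finset.sum_congr rfl hterm, Finset.sum_const, Finset.card_range, nsmul_eq_mul]
          rw [hsum] at this
          calc ENNReal.ofReal ((n:ℝ) * (2 * sin (π/(2*n))))
              = ENNReal.ofReal (n:ℝ) * ENNReal.ofReal (2 * sin (π/(2*n))) := by
                apply ENNReal.ofReal_mul (by positivity)
            _ = (n:ENNReal) * ENNReal.ofReal (2 * sin (π/(2*n))) := by
                rw [ENNReal.ofReal_natCast]
            _ ≤ _ := this
        have L : Filter.Tendsto (fun n : ℕ =>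
            ENNReal.ofReal ((n:ℝ) * (2 * sin (π/(2*n))))) Filter.atTop
            (nhds (ENNReal.ofReal π)) :=
          (ENNReal.continuous_ofReal.tendsto π).comp sin_div_lim
        refine le_of_tendsto L ?_
        filter_upwards [Filter.eventually_ge_atTop 1] with n hn
        exact key n hn
    -- combine
    have s2 := eVariationOn.Icc_add_Icc (s := (Set.univ : Set ℝ)) F
      (by linarith : (1:ℝ) ≤ 1+π) (by linarith : (1+π:ℝ) ≤ π+2) (Set.mem_univ _)
    have s1 := eVariationOn.Icc_add_Icc (s := (Set.univ : Set ℝ)) F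
      (by norm_num : (0:ℝ) ≤ 1) (by linarith : (1:ℝ) ≤ π+2) (Set.mem_univ _)
    simp only [Set.univ_inter] at s1 s2
    rw [← s1, ← s2, V1, V2, V3]
    rw [← ENNReal.ofReal_add (by linarith) (by linarith),
      ← ENNReal.ofReal_add (by linarith) (by linarith)]
    congr 1
    ring
  · -- convex hull contains the disk
    intro p hp
    set x := p 0 with hx
    set y := p 1 with hy
    have hxy : x^2 + y^2 ≤ 1 := by
      have h1 : ‖p‖ ≤ 1 := by simpa using mem_closedBall_zero_iff.mp hp
      have h2 : ‖p‖^2 = x^2 + y^2 := by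
        rw [EuclideanSpace.norm_eq, Real.sq_sqrt (by positivity)]
        simp [Fin.sum_univ_two, sq_abs, hx, hy]
      nlinarith [norm_nonneg p]
    have hx1 : -1 ≤ x ∧ x ≤ 1 := by constructor <;> nlinarith
    have hy1 : -1 ≤ y := by nlinarith
    set s := Real.sqrt (1 - x^2) with hs
    have hs0 : 0 ≤ s := Real.sqrt_nonneg _
    have hys : y ≤ s := by
      rcases le_or_gt y 0 with h | h
      · linarith
      · have h1 : y = Real.sqrt (y^2) := (Real.sqrt_sq h.le).symm
        rw [h1, hs]
        exact Real.sqrt_le_sqrt (by nlinarith)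
    set hull := convexHull ℝ (F '' Set.Icc 0 (π+2)) with hhull
    have hcvx : Convex ℝ hull := convex_convexHull ℝ _
    have hA : F (1 + Real.arccos x) = pt x s := by
      by_cases harc : 1 + Real.arccos x ≤ 1
      · have h0 : Real.arccos x = 0 :=
          le_antisymm (by linarith) (Real.arccos_nonneg x)
        have hx1' : x = 1 := by
          have := Real.cos_arccos hx1.1 hx1.2
          rw [h0] at this; simpa using this.symm
        simp only [hFdef, if_pos harc, h0]
        rw [hx1', hs, hx1']
        norm_num
      · have h2 : 1 + Real.arccos x ≤ 1 + π := by linarith [Real.arccos_le_pi x]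
        simp only [hFdef, if_neg harc, if_pos h2]
        rw [show (1 + Real.arccos x - 1) = Real.arccos x by ring,
          Real.cos_arccos hx1.1 hx1.2, Real.sin_arccos]
    have hAmem : pt x s ∈ hull := by
      rw [← hA]
      apply subset_convexHull
      exact ⟨1 + Real.arccos x,
        ⟨by linarith [Real.arccos_nonneg x], by linarith [Real.arccos_le_pi x]⟩, rfl⟩
    have h0mem : pt 1 (-1) ∈ hull := by
      have : F 0 = pt 1 (-1) := by
        simp only [hFdef, if_pos (by norm_num : (0:ℝ) ≤ 1)]; norm_num
      rw [← this]
      apply subset_convexHull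
      exact ⟨0, ⟨le_refl _, by linarith⟩, rfl⟩
    have hemem : pt (-1) (-1) ∈ hull := by
      have : F (π+2) = pt (-1) (-1) := by
        simp only [hFdef, if_neg (by linarith : ¬ (π+2:ℝ) ≤ 1),
          if_neg (by linarith : ¬ (π+2:ℝ) ≤ 1+π)]
        rw [show (-(π+2-1-π):ℝ) = -1 by ring]
      rw [← this]
      apply subset_convexHull
      exact ⟨π+2, ⟨by linarith, le_refl _⟩, rfl⟩
    have hBmem : pt x (-1) ∈ hull := by
      have hc := hcvx h0mem hemem (by linarith : (0:ℝ) ≤ (1+x)/2)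
        (by linarith : (0:ℝ) ≤ (1-x)/2) (by ring : (1+x)/2 + (1-x)/2 = 1)
      rw [pt_comb] at hc
      rw [show ((1+x)/2 * 1 + (1-x)/2 * (-1)) = x by ring,
        show ((1+x)/2 * (-1) + (1-x)/2 * (-1)) = -1 by ring] at hc
      exact hc
    have hsp : (0:ℝ) < s + 1 := by linarith
    have esum : (y+1)/(s+1) + (s-y)/(s+1) = 1 := by
      rw [← add_div, show y+1+(s-y) = s+1 by ring, div_self hsp.ne']
    have hc := hcvx hAmem hBmem
      (div_nonneg (by linarith) (by linarith))
      (div_nonneg (by linarith) hsp.le) esum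
    have hps : ((y+1)/(s+1)) • pt x s + ((s-y)/(s+1)) • pt x (-1) = p := by
      rw [pt_comb]
      have e1 : (y+1)/(s+1) * x + (s-y)/(s+1) * x = x := by
        rw [← add_mul, esum, one_mul]
      have e2 : (y+1)/(s+1) * s + (s-y)/(s+1) * (-1) = y := by
        rw [div_mul_eq_mul_div, div_mul_eq_mul_div, ← add_div,
          show (y+1)*s + (s-y)*(-1) = y*(s+1) by ring, mul_div_assoc,
          div_self hsp.ne', mul_one]
      rw [e1, e2]
      ext i; fin_cases i <;> rfl
    rwa [hps] at hc
end
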